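/- For any (possibly multi-round) perfectly secure PMT protocol over an (n, t_a, t_b, t_e, λ)-multipath setting with perfect reliability (δ = 0) and perfect secrecy (ε = 0), the secrecy rate satisfies k/c ≤ max(0, 1 − t_e/t_ab), where t_ab = min(t_a, t_b). In particular, if t_e ≥ t_ab, no perfect PMT protocol with positive rate exists. -/

import Mathlib

open scoped BigOperators Classical
noncomputable section

/-- Extremal subset selection: one can always pick `T ⊆ S` with `|T| ≤ t` such that
the weight left in `S \ T` is at most a `(m-t)/m` fraction for any `m ≥ |S|`. -/
lemma pick_heavy {α : Type*} [DecidableEq α] (S : Finset α) (w : α → ℕ) (t : ℕ) :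
    ∃ T ⊆ S, T.card ≤ t ∧
      ∀ m, S.card ≤ m → m * ∑ i ∈ S \ T, w i ≤ (m - t) * ∑ i ∈ S, w i := by
  by_cases hst : S.card ≤ t
  · exact ⟨S, Finset.Subset.refl S, hst, fun m hm => by simp⟩
  push_neg at hst
  -- choose T of card t maximizing the weight
  obtain ⟨T₀, hT₀sub, hT₀card⟩ := Finset.exists_subset_card_eq hst.le
  obtain ⟨T, hTmem, hTmax⟩ := Finset.exists_max_image
    ((S.powerset.filter (fun T => T.card = t))) (fun T => ∑ i ∈ T, w i)
    ⟨T₀, by simp [hT₀sub, hT₀card]⟩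
  simp only [Finset.mem_filter, Finset.mem_powerset] at hTmem
  obtain ⟨hTsub, hTcard⟩ := hTmem
  refine ⟨T, hTsub, hTcard.le, fun m hm => ?_⟩
  -- swap property
  have hswap : ∀ a ∈ S \ T, ∀ b ∈ T, w a ≤ w b := by
    intro a ha b hb
    rw [Finset.mem_sdiff] at ha
    have hT' : insert a (T.erase b) ∈ S.powerset.filter (fun T => T.card = t) := by
      simp only [Finset.mem_filter, Finset.mem_powerset]
      constructor
      · intro x hx
        rcases Finset.mem_insert.mp hx with rfl | hx
        · exact ha.1
        · exact hTsub (Finset.mem_of_mem_erase hx)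
      · rw [Finset.card_insert_of_notMem (fun h => ha.2 (Finset.mem_of_mem_erase h)),
          Finset.card_erase_of_mem hb, hTcard]
        have : 0 < T.card := Finset.card_pos.mpr ⟨b, hb⟩
        omega
    have := hTmax _ hT'
    rw [Finset.sum_insert (fun h => ha.2 (Finset.mem_of_mem_erase h))] at this
    have herase : ∑ i ∈ T.erase b, w i + w b = ∑ i ∈ T, w i :=
      Finset.sum_erase_add T w hb
    omega
  -- core inequality : t * Σ_{S\T} ≤ (|S| - t) * Σ_T
  have hcore : t * ∑ i ∈ S \ T, w i ≤ (S.card - t) * ∑ i ∈ T, w i := by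
    have h1 : ∀ b ∈ T, ∑ a ∈ S \ T, w a ≤ (S \ T).card * w b := by
      intro b hb
      calc ∑ a ∈ S \ T, w a ≤ ∑ _a ∈ S \ T, w b :=
            Finset.sum_le_sum (fun a ha => hswap a ha b hb)
        _ = (S \ T).card * w b := by rw [Finset.sum_const, smul_eq_mul]
    have h2 : ∑ _b ∈ T, ∑ a ∈ S \ T, w a ≤ ∑ b ∈ T, (S \ T).card * w b :=
      Finset.sum_le_sum h1
    rw [Finset.sum_const, smul_eq_mul, ← Finset.mul_sum,
      Finset.card_sdiff_of_subset hTsub, hTcard] at h2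
    exact h2
  have hsplit : ∑ i ∈ S \ T, w i + ∑ i ∈ T, w i = ∑ i ∈ S, w i :=
    Finset.sum_sdiff hTsub
  have hc : t ≤ S.card := hst.le
  have h3 : (S.card - t) * ∑ i ∈ T, w i ≤ (m - t) * ∑ i ∈ T, w i :=
    Nat.mul_le_mul_right _ (by omega)
  calc m * ∑ i ∈ S \ T, w i
      = t * ∑ i ∈ S \ T, w i + (m - t) * ∑ i ∈ S \ T, w i := by
        rw [← Nat.add_mul]; congr 1; omega
    _ ≤ (m - t) * ∑ i ∈ T, w i + (m - t) * ∑ i ∈ S \ T, w i := by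
        exact Nat.add_le_add_right (hcore.trans h3) _
    _ = (m - t) * ∑ i ∈ S, w i := by rw [← Nat.mul_add, Nat.add_comm, hsplit]


/-- **Upper bound on the rate of perfect PMT in the general multipath setting.**

Model: there are `n` paths and `r` rounds.  In round `j` one of the two communicants is the
sender (`side j = true` means Alice sends, `false` means Bob sends); the sender transmits on
the path set `M j` (of size at most `t_a` resp. `t_b`) and the receiver listens on the path
set `N j` (of size at most `t_b` resp. `t_a`); `ℓ j i` is the number of bits sent on path `i`
in round `j`.  For each `k`-bit message `s`, `P s` is the distribution of the full transcript.
The receiver decodes from his view (the bits on paths in `M j ∩ N j`), and the eavesdropper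
may in each round observe any set `T j` of at most `t_e` paths.

Perfect reliability (`δ = 0`): decoding is always correct on the support of `P s`.
Perfect secrecy (`ε = 0`): for every eavesdropper strategy, the distribution of the
eavesdropper's view is the same for all messages.

Conclusion: the secrecy rate satisfies `k/c ≤ max(0, 1 − t_e/t_ab)` with
`t_ab = min(t_a, t_b)` and `c = Σ_j Σ_{i ∈ M j} ℓ j i` the total number of communicated bits.
In particular, if `t_e ≥ t_ab` no perfect PMT protocol with positive rate exists. -/
theorem perfect_pmt_rate_upper_bound
    (n t_a t_b t_e k r : ℕ) (htab : 0 < min t_a t_b)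
    (side : Fin r → Bool) (M N : Fin r → Finset (Fin n)) (ℓ : Fin r → Fin n → ℕ)
    (hM : ∀ j, (M j).card ≤ if side j then t_a else t_b)
    (hN : ∀ j, (N j).card ≤ if side j then t_b else t_a)
    (P : Fin (2 ^ k) → (∀ j : Fin r, ∀ i : Fin n, Fin (2 ^ ℓ j i)) → ℝ)
    (hP0 : ∀ s x, 0 ≤ P s x) (hP1 : ∀ s, ∑ x, P s x = 1)
    (dec : (∀ j : Fin r, ∀ i : Fin n, Option (Fin (2 ^ ℓ j i))) → Fin (2 ^ k))
    -- perfect reliability: Bob decodes correctly from his view of the transcript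
    (hrel : ∀ s x, 0 < P s x →
      dec (fun j i => if i ∈ M j ∩ N j then some (x j i) else none) = s)
    -- perfect secrecy: for every eavesdropper strategy, the view distribution is
    -- independent of the message
    (hsec : ∀ T : Fin r → Finset (Fin n), (∀ j, (T j).card ≤ t_e) →
      ∀ s₁ s₂ : Fin (2 ^ k), ∀ v : ∀ j : Fin r, ∀ i : Fin n, Option (Fin (2 ^ ℓ j i)),
        (∑ x, if (fun j i => if i ∈ M j ∩ T j then some (x j i) else none) = v
            then P s₁ x else 0)
        = (∑ x, if (fun j i => if i ∈ M j ∩ T j then some (x j i) else none) = v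
            then P s₂ x else 0)) :
    (k : ℝ) / (∑ j, ∑ i ∈ M j, ℓ j i : ℕ) ≤
      max 0 (1 - (t_e : ℝ) / (min t_a t_b : ℕ)) := by
  -- cardinality of Bob's view sets
  have hScard : ∀ j, (M j ∩ N j).card ≤ min t_a t_b := by
    intro j
    have h1 : (M j ∩ N j).card ≤ (M j).card :=
      Finset.card_le_card (Finset.inter_subset_left)
    have h2 : (M j ∩ N j).card ≤ (N j).card :=
      Finset.card_le_card (Finset.inter_subset_right)
    have := hM j; have := hN j
    rcases Bool.eq_false_or_eq_true (side j) with h | h <;> simp [h] at * <;> omega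
  -- the key counting lemma
  have key : ∀ T : Fin r → Finset (Fin n), (∀ j, T j ⊆ M j ∩ N j) →
      (∀ j, (T j).card ≤ t_e) →
      k ≤ ∑ j, ∑ i ∈ (M j ∩ N j) \ T j, ℓ j i := by
    intro T hTsub hTe
    set E : (∀ j : Fin r, ∀ i : Fin n, Fin (2 ^ ℓ j i)) →
        (∀ j : Fin r, ∀ i : Fin n, Option (Fin (2 ^ ℓ j i))) :=
      fun x => fun j i => if i ∈ M j ∩ T j then some (x j i) else none with hE
    -- find a transcript with positive probability under message 0
    have h2k : 0 < 2 ^ k := Nat.pow_pos (n := k) (by norm_num)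
    obtain ⟨x₀, hx₀⟩ : ∃ x, 0 < P ⟨0, h2k⟩ x := by
      by_contra h
      push_neg at h
      have : ∀ x ∈ Finset.univ, P ⟨0, h2k⟩ x = 0 :=
        fun x _ => le_antisymm (h x) (hP0 _ x)
      have := Finset.sum_eq_zero this
      rw [hP1] at this; norm_num at this
    set v := E x₀ with hv
    -- for every message there is a consistent positive-probability transcript
    have hex : ∀ s : Fin (2 ^ k), ∃ x, 0 < P s x ∧ E x = v := by
      intro s
      by_contra h
      push_neg at h
      have hzero : (∑ x, if E x = v then P s x else 0) = 0 := by
        refine Finset.sum_eq_zero fun x _ => ?_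
        by_cases hx : E x = v
        · simp only [hx, if_true]
          by_contra hne
          have hlt : 0 < P s x := lt_of_le_of_ne (hP0 s x) (Ne.symm hne)
          exact h x hlt hx
        · simp [hx]
      have hpos : 0 < ∑ x, if E x = v then P ⟨0, h2k⟩ x else 0 := by
        refine Finset.sum_pos' (fun x _ => by split <;> simp [hP0]) ⟨x₀, Finset.mem_univ _, ?_⟩
        simpa [hv] using hx₀
      rw [hsec T hTe ⟨0, h2k⟩ s v] at hpos
      rw [hzero] at hpos
      exact lt_irrefl _ hpos
    choose g hg1 hg2 using hex
    -- injection into the bits on (M∩N)\T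
    set D : Fin r → Finset (Fin n) := fun j => (M j ∩ N j) \ T j with hD
    have hinj : Function.Injective
        (fun s : Fin (2 ^ k) => (fun j (i : (D j : Finset (Fin n))) => g s j i :
          ∀ j : Fin r, ∀ i : (D j : Finset (Fin n)), Fin (2 ^ ℓ j i))) := by
      intro s₁ s₂ hf
      have hview : (fun j i => if i ∈ M j ∩ N j then some (g s₁ j i) else none)
          = (fun j i => if i ∈ M j ∩ N j then some (g s₂ j i) else none) := by
        funext j i
        by_cases hi : i ∈ M j ∩ N j
        · simp only [hi, if_true]
          by_cases hiT : i ∈ T j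
          · have hMT : i ∈ M j ∩ T j :=
              Finset.mem_inter.mpr ⟨(Finset.mem_inter.mp hi).1, hiT⟩
            have e1 := congrFun (congrFun (hg2 s₁) j) i
            have e2 := congrFun (congrFun (hg2 s₂) j) i
            simp only [hE, hMT, if_true] at e1 e2
            rw [e1, e2]
          · have hiD : i ∈ D j := Finset.mem_sdiff.mpr ⟨hi, hiT⟩
            have := congrFun (congrFun hf j) ⟨i, hiD⟩
            simpa using this
        · simp [hi]
      have d1 := hrel s₁ (g s₁) (hg1 s₁)
      have d2 := hrel s₂ (g s₂) (hg1 s₂)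
      rw [← d1, ← d2, hview]
    have hcard := Fintype.card_le_of_injective _ hinj
    rw [Fintype.card_fin] at hcard
    have hcard2 : Fintype.card (∀ j : Fin r, ∀ i : (D j : Finset (Fin n)),
        Fin (2 ^ ℓ j i)) = 2 ^ (∑ j, ∑ i ∈ D j, ℓ j i) := by
      rw [Fintype.card_pi]
      have : ∀ j, Fintype.card (∀ i : (D j : Finset (Fin n)), Fin (2 ^ ℓ j i))
          = 2 ^ (∑ i ∈ D j, ℓ j i) := by
        intro j
        rw [Fintype.card_pi]
        rw [← Finset.prod_pow_eq_pow_sum]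
        rw [← Finset.prod_attach (D j) (fun i => 2 ^ ℓ j i)]
        exact Finset.prod_congr rfl (fun i _ => Fintype.card_fin _)
      rw [Finset.prod_congr rfl (fun j _ => this j), Finset.prod_pow_eq_pow_sum]
    rw [hcard2] at hcard
    exact (Nat.pow_le_pow_iff_right (by norm_num)).mp hcard
  set m := min t_a t_b with hm
  set c := ∑ j, ∑ i ∈ M j, ℓ j i with hc
  by_cases hte : m ≤ t_e
  · -- eavesdropper sees everything Bob sees: k = 0
    have hk : k ≤ ∑ j, ∑ i ∈ (M j ∩ N j) \ (M j ∩ N j), ℓ j i :=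
      key (fun j => M j ∩ N j) (fun j => Finset.Subset.refl _)
        (fun j => (hScard j).trans hte)
    simp only [Finset.sdiff_self, Finset.sum_empty] at hk
    have hk0 : k = 0 := by simpa using hk
    rw [hk0]
    simp only [Nat.cast_zero, zero_div]
    exact le_max_left _ _
  · push_neg at hte
    choose T hT1 hT2 hT3 using fun j => pick_heavy (M j ∩ N j) (ℓ j) t_e
    have hkey := key T hT1 hT2
    have hsum : m * k ≤ (m - t_e) * c := by
      calc m * k ≤ m * ∑ j, ∑ i ∈ (M j ∩ N j) \ T j, ℓ j i :=
            Nat.mul_le_mul_left m hkey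
        _ = ∑ j, m * ∑ i ∈ (M j ∩ N j) \ T j, ℓ j i := Finset.mul_sum _ _ _
        _ ≤ ∑ j, (m - t_e) * ∑ i ∈ M j ∩ N j, ℓ j i :=
            Finset.sum_le_sum (fun j _ => hT3 j m (hScard j))
        _ ≤ ∑ j, (m - t_e) * ∑ i ∈ M j, ℓ j i :=
            Finset.sum_le_sum (fun j _ => Nat.mul_le_mul_left _
              (Finset.sum_le_sum_of_subset Finset.inter_subset_left))
        _ = (m - t_e) * c := (Finset.mul_sum _ _ _).symm
    have hmpos : (0 : ℝ) < m := by exact_mod_cast htab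
    have hfrac : (0 : ℝ) ≤ 1 - (t_e : ℝ) / m := by
      rw [sub_nonneg, div_le_one hmpos]
      exact_mod_cast hte.le
    rw [max_eq_right hfrac]
    rcases Nat.eq_zero_or_pos c with hc0 | hc0
    · rw [hc0]
      simpa using hfrac
    have hcpos : (0 : ℝ) < c := by exact_mod_cast hc0
    rw [div_le_iff₀ hcpos]
    have hcast : (m : ℝ) * k ≤ ((m : ℝ) - t_e) * c := by
      have := hsum
      have h2 : ((m - t_e : ℕ) : ℝ) = (m : ℝ) - t_e := by
        rw [Nat.cast_sub hte.le]
      calc (m : ℝ) * k = ((m * k : ℕ) : ℝ) := by push_cast; ring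
        _ ≤ (((m - t_e) * c : ℕ) : ℝ) := by exact_mod_cast hsum
        _ = ((m : ℝ) - t_e) * c := by rw [Nat.cast_mul, h2]
    have h3 : (k : ℝ) ≤ (((m : ℝ) - t_e) * c) / m := by
      rw [le_div_iff₀ hmpos, mul_comm]
      exact hcast
    calc (k : ℝ) ≤ (((m : ℝ) - t_e) * c) / m := h3
      _ = (1 - (t_e : ℝ) / m) * c := by field_simp
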